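/- Let $n \geq 1$, $d_1 < \dots < d_n$ positive integers, $a_i \neq 0$, and define $A_{-k}(F_1,\dots,F_n)(x) := 2^{-k}\int_0^{2^k}\prod_{i=1}^n F_i(x_1,\dots,x_i - a_it^{d_i},\dots,x_n)\,dt$ for functions $F_i$ on $\mathbb{R}^n$. Assume there exist $c > 0$ and $C$ such that for all $k \geq 0$ and $\delta \in (0,1)$: whenever some $\widehat{F_j}$ vanishes on $\{|\xi_j| \leq 2^{-kd_j}\delta^{-1}\}$, one has $\|A_{-k}(F_1,\dots,F_n)\|_{L^1(\mathbb{R}^n)} \leq C(\delta^c + 2^{-kc})\prod_i\|F_i\|_{L^n(\mathbb{R}^n)}$. Then there exist $c' > 0$ and $C'$ such that for ALL $k \in \mathbb{Z}$ and all $\delta \in (0,1)$: whenever some $\widehat{F_j}$ vanishes on $\{|\xi_j| \leq 2^{-kd_j}\delta^{-1}\}$, one has $\|A_{-k}(F_1,\dots,F_n)\|_{L^1(\mathbb{R}^n)} \leq C'\delta^{c'}\prod_i\|F_i\|_{L^n(\mathbb{R}^n)}$. -/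

import Mathlib

open MeasureTheory FourierTransform
open scoped ENNReal

/-- The averaging operator
`A_{-k}(F_1,…,F_n)(x) = 2^{-k} ∫_0^{2^k} ∏ᵢ Fᵢ(x_1,…,x_i - aᵢ t^{dᵢ},…,x_n) dt`
on functions on `ℝⁿ`. -/
noncomputable def avgOpE (n : ℕ) (d : Fin n → ℕ) (a : Fin n → ℝ) (k : ℤ)
    (F : Fin n → EuclideanSpace ℝ (Fin n) → ℂ) : EuclideanSpace ℝ (Fin n) → ℂ :=
  fun x => ((2 : ℝ) ^ (-k : ℤ) : ℝ) •
    ∫ t in Set.Ioc (0 : ℝ) ((2 : ℝ) ^ (k : ℤ)),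
      ∏ i, F i (WithLp.toLp 2 (Function.update x i (x i - a i * t ^ (d i))))

namespace AvgRescaleAux

variable {n : ℕ}

noncomputable def scaleLE (c : Fin n → ℝ) (hc : ∀ i, c i ≠ 0) :
    EuclideanSpace ℝ (Fin n) ≃ₗ[ℝ] EuclideanSpace ℝ (Fin n) where
  toFun x := WithLp.toLp 2 (fun i => c i * x i)
  invFun x := WithLp.toLp 2 (fun i => (c i)⁻¹ * x i)
  map_add' x y := by
    ext i
    simp [PiLp.add_apply, mul_add]
  map_smul' r x := by
    ext i
    simp [PiLp.smul_apply, smul_eq_mul]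
    ring
  left_inv x := by
    ext i
    exact inv_mul_cancel_left₀ (hc i) _
  right_inv x := by
    ext i
    exact mul_inv_cancel_left₀ (hc i) _

lemma scaleLE_det (c : Fin n → ℝ) (hc : ∀ i, c i ≠ 0) :
    LinearMap.det (scaleLE c hc).toLinearMap = ∏ i, c i := by
  classical
  let b := (EuclideanSpace.basisFun (Fin n) ℝ).toBasis
  rw [← LinearMap.det_toMatrix b]
  have : LinearMap.toMatrix b b (scaleLE c hc).toLinearMap = Matrix.diagonal c := by
    ext i j
    rw [LinearMap.toMatrix_apply]
    have hbj : b j = EuclideanSpace.single j (1:ℝ) := by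
      simp [b, EuclideanSpace.basisFun_apply]
    have : ((scaleLE c hc).toLinearMap (b j)) = WithLp.toLp 2 (fun i => c i * (EuclideanSpace.single j (1:ℝ)) i) := by
      rw [hbj]; rfl
    rw [this]
    simp [b, OrthonormalBasis.coe_toBasis_repr_apply, EuclideanSpace.basisFun_repr,
      EuclideanSpace.single_apply, Matrix.diagonal_apply]
  rw [this, Matrix.det_diagonal]

noncomputable def scaleME (c : Fin n → ℝ) (hc : ∀ i, c i ≠ 0) :
    EuclideanSpace ℝ (Fin n) ≃ᵐ EuclideanSpace ℝ (Fin n) :=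
  ((scaleLE c hc).toContinuousLinearEquiv.toHomeomorph).toMeasurableEquiv

lemma scaleME_apply (c : Fin n → ℝ) (hc : ∀ i, c i ≠ 0) (x : EuclideanSpace ℝ (Fin n)) :
    scaleME c hc x = WithLp.toLp 2 (fun i => c i * x i) := rfl

lemma map_scaleME_volume (c : Fin n → ℝ) (hc : ∀ i, c i ≠ 0) :
    Measure.map (scaleME c hc) volume
      = ENNReal.ofReal |(∏ i, c i)⁻¹| • volume := by
  have h1 : (⇑(scaleME c hc) : EuclideanSpace ℝ (Fin n) → EuclideanSpace ℝ (Fin n))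
      = ⇑(scaleLE c hc).toLinearMap := rfl
  have hdet : LinearMap.det (scaleLE c hc).toLinearMap ≠ 0 := by
    rw [scaleLE_det]; exact Finset.prod_ne_zero_iff.mpr fun i _ => hc i
  rw [h1, Measure.map_linearMap_addHaar_eq_smul_addHaar volume hdet, scaleLE_det]

lemma eLpNorm_comp_scaleME (c : Fin n → ℝ) (hc : ∀ i, c i ≠ 0)
    (g : EuclideanSpace ℝ (Fin n) → ℂ) (p : ℝ≥0∞) (hp0 : p ≠ 0) (hpt : p ≠ ∞) :
    eLpNorm (fun x => g (scaleME c hc x)) p volume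
      = ENNReal.ofReal |(∏ i, c i)⁻¹| ^ (1 / p.toReal) * eLpNorm g p volume := by
  rw [eLpNorm_eq_lintegral_rpow_enorm_toReal hp0 hpt, eLpNorm_eq_lintegral_rpow_enorm_toReal hp0 hpt]
  have := lintegral_map_equiv (μ := (volume : Measure (EuclideanSpace ℝ (Fin n))))
    (fun y => ‖g y‖ₑ ^ p.toReal) (scaleME c hc)
  rw [map_scaleME_volume, lintegral_smul_measure] at this
  rw [show (∫⁻ x, ‖g (scaleME c hc x)‖ₑ ^ p.toReal ∂volume)
      = ENNReal.ofReal |(∏ i, c i)⁻¹| * ∫⁻ y, ‖g y‖ₑ ^ p.toReal ∂volume from this.symm,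
    ENNReal.mul_rpow_of_nonneg _ _ (by positivity)]

lemma memLp_comp_scaleME (c : Fin n → ℝ) (hc : ∀ i, c i ≠ 0)
    {g : EuclideanSpace ℝ (Fin n) → ℂ} {p : ℝ≥0∞} (hg : MemLp g p volume) :
    MemLp (fun x => g (scaleME c hc x)) p volume := by
  have h1 : MemLp g p (Measure.map (scaleME c hc) volume) := by
    rw [map_scaleME_volume]
    exact hg.smul_measure ENNReal.ofReal_ne_top
  exact (memLp_map_measure_iff h1.aestronglyMeasurable
    (scaleME c hc).measurable.aemeasurable).mp h1

lemma scaleME_symm_apply (c : Fin n → ℝ) (hc : ∀ i, c i ≠ 0) (x : EuclideanSpace ℝ (Fin n)) :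
    (scaleME c hc).symm x = WithLp.toLp 2 (fun i => (c i)⁻¹ * x i) := rfl

open scoped RealInnerProductSpace in
lemma fourier_comp_scaleME (c : Fin n → ℝ) (hc : ∀ i, c i ≠ 0)
    (g : EuclideanSpace ℝ (Fin n) → ℂ) (ξ : EuclideanSpace ℝ (Fin n)) :
    𝓕 (fun x => g (scaleME c hc x)) ξ
      = |(∏ i, c i)⁻¹| • 𝓕 g ((scaleME c hc).symm ξ) := by
  rw [Real.fourier_eq, Real.fourier_eq]
  have key : (fun v : EuclideanSpace ℝ (Fin n) => 𝐞 (-⟪v, ξ⟫) • g (scaleME c hc v))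
      = fun v => (fun y => 𝐞 (-⟪y, (scaleME c hc).symm ξ⟫) • g y) (scaleME c hc v) := by
    funext v
    simp only []
    congr 2
    rw [scaleME_symm_apply, scaleME_apply]
    simp only [PiLp.inner_apply, RCLike.inner_apply, conj_trivial]
    congr 1
    refine Finset.sum_congr rfl fun i _ => ?_
    rw [mul_mul_mul_comm, inv_mul_cancel₀ (hc i), one_mul]
  rw [key]
  rw [← MeasureTheory.integral_map_equiv (scaleME c hc)
    (fun y => 𝐞 (-⟪y, (scaleME c hc).symm ξ⟫) • g y)]
  rw [map_scaleME_volume, integral_smul_measure, ENNReal.toReal_ofReal (abs_nonneg _)]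

lemma avg_rescale (d : Fin n → ℕ) (a : Fin n → ℝ) (k k0 : ℤ)
    (F : Fin n → EuclideanSpace ℝ (Fin n) → ℂ) (x : EuclideanSpace ℝ (Fin n)) :
    avgOpE n d a k F x
      = avgOpE n d a k0
          (fun i y => F i (WithLp.toLp 2 (fun j => (2:ℝ) ^ ((k - k0) * (d j : ℤ)) * y j)))
          (WithLp.toLp 2 (fun j => (2:ℝ) ^ ((k0 - k) * (d j : ℤ)) * x j)) := by
  classical
  have hlam0 : ((2:ℝ) ^ (k - k0)) ≠ 0 := by positivity
  have hcancel : ∀ j : Fin n,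
      (2:ℝ) ^ ((k - k0) * (d j : ℤ)) * ((2:ℝ) ^ ((k0 - k) * (d j : ℤ)) * x j) = x j := by
    intro j
    rw [← mul_assoc, ← zpow_add₀ (two_ne_zero),
      show (k - k0) * (d j : ℤ) + (k0 - k) * (d j : ℤ) = 0 by ring, zpow_zero, one_mul]
  have hup : ∀ (t : ℝ) (i : Fin n),
      (WithLp.toLp 2 (fun j => (2:ℝ) ^ ((k - k0) * (d j : ℤ)) *
        (Function.update (fun j' => (2:ℝ) ^ ((k0 - k) * (d j' : ℤ)) * x j') i
          ((2:ℝ) ^ ((k0 - k) * (d i : ℤ)) * x i - a i * t ^ (d i)) j)) : EuclideanSpace ℝ (Fin n))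
      = (WithLp.toLp 2 (Function.update x i (x i - a i * ((2:ℝ) ^ (k - k0) * t) ^ (d i))) :
          EuclideanSpace ℝ (Fin n)) := by
    intro t i
    congr 1
    funext j
    rcases eq_or_ne j i with rfl | hj
    · rw [Function.update_self, Function.update_self, mul_sub, hcancel, mul_pow,
        ← zpow_natCast ((2:ℝ) ^ (k - k0)) (d j), ← zpow_mul]
      ring
    · rw [Function.update_of_ne hj, Function.update_of_ne hj, hcancel]
  show _ = ((2:ℝ) ^ (-k0 : ℤ)) • ∫ t in Set.Ioc (0:ℝ) ((2:ℝ) ^ (k0:ℤ)),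
      ∏ i, F i (WithLp.toLp 2 (fun j => (2:ℝ) ^ ((k - k0) * (d j : ℤ)) *
        (Function.update (fun j' => (2:ℝ) ^ ((k0 - k) * (d j' : ℤ)) * x j') i
          ((2:ℝ) ^ ((k0 - k) * (d i : ℤ)) * x i - a i * t ^ (d i)) j)))
  simp only [hup]
  rw [avgOpE]
  have h2 : (∫ t in Set.Ioc (0:ℝ) ((2:ℝ)^(k0:ℤ)),
        ∏ i, F i (WithLp.toLp 2 (Function.update x i (x i - a i * ((2:ℝ)^(k-k0) * t) ^ (d i)))))
      = ((2:ℝ)^(k0 - k)) • ∫ t in Set.Ioc (0:ℝ) ((2:ℝ)^(k:ℤ)),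
        ∏ i, F i (WithLp.toLp 2 (Function.update x i (x i - a i * t ^ (d i)))) := by
    rw [← intervalIntegral.integral_of_le (by positivity : (0:ℝ) ≤ (2:ℝ)^(k0:ℤ)),
        ← intervalIntegral.integral_of_le (by positivity : (0:ℝ) ≤ (2:ℝ)^(k:ℤ)),
        intervalIntegral.integral_comp_mul_left
          (fun s => ∏ i, F i (WithLp.toLp 2 (Function.update x i (x i - a i * s ^ (d i))))) hlam0,
        mul_zero, show (2:ℝ)^(k-k0) * (2:ℝ)^(k0:ℤ) = (2:ℝ)^(k:ℤ) by
          rw [← zpow_add₀ (two_ne_zero)]; ring_nf,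
        ← zpow_neg, show -(k - k0) = k0 - k by ring]
  rw [h2, smul_smul, ← zpow_add₀ (two_ne_zero), show (-k0) + (k0 - k) = -k by ring]

end AvgRescaleAux

open AvgRescaleAux

/-- Rescaling step removing the `k`-dependence in the Kosz–Mirek–Peluse–Wright estimate:
if the smoothing bound `‖A_{-k}(F)‖_{L¹} ≤ C(δ^c + 2^{-kc}) ∏ ‖Fᵢ‖_{Lⁿ}` holds for all
`k ≥ 0` whenever some `F̂ⱼ` vanishes on `{|ξⱼ| ≤ 2^{-kdⱼ} δ⁻¹}`, then
`‖A_{-k}(F)‖_{L¹} ≤ C' δ^{c'} ∏ ‖Fᵢ‖_{Lⁿ}` holds for ALL `k ∈ ℤ` under the same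
frequency hypothesis. -/
theorem avgOp_smoothing_all_scales (n : ℕ) (hn : 1 ≤ n) (d : Fin n → ℕ) (hd : StrictMono d)
    (hdpos : ∀ i, 0 < d i) (a : Fin n → ℝ) (ha : ∀ i, a i ≠ 0)
    (c C : ℝ) (hc : 0 < c) (hC : 0 < C)
    (hyp : ∀ k : ℤ, 0 ≤ k → ∀ δ : ℝ, 0 < δ → δ < 1 →
      ∀ F : Fin n → EuclideanSpace ℝ (Fin n) → ℂ,
        (∀ i, MemLp (F i) (n : ℝ≥0∞) volume) →
        (∃ j, ∀ ξ : EuclideanSpace ℝ (Fin n),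
            |ξ j| ≤ (2 : ℝ) ^ (-(k * (d j : ℤ))) * δ⁻¹ → 𝓕 (F j) ξ = 0) →
        eLpNorm (avgOpE n d a k F) 1 volume
          ≤ ENNReal.ofReal (C * (δ ^ c + (2 : ℝ) ^ (-(c * (k : ℝ)))))
              * ∏ i, eLpNorm (F i) (n : ℝ≥0∞) volume) :
    ∃ c' > (0 : ℝ), ∃ C' > (0 : ℝ), ∀ k : ℤ, ∀ δ : ℝ, 0 < δ → δ < 1 →
      ∀ F : Fin n → EuclideanSpace ℝ (Fin n) → ℂ,
        (∀ i, MemLp (F i) (n : ℝ≥0∞) volume) →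
        (∃ j, ∀ ξ : EuclideanSpace ℝ (Fin n),
            |ξ j| ≤ (2 : ℝ) ^ (-(k * (d j : ℤ))) * δ⁻¹ → 𝓕 (F j) ξ = 0) →
        eLpNorm (avgOpE n d a k F) 1 volume
          ≤ ENNReal.ofReal (C' * δ ^ c')
              * ∏ i, eLpNorm (F i) (n : ℝ≥0∞) volume := by
  classical
  refine ⟨c, hc, 2 * C, by positivity, ?_⟩
  intro k δ hδ0 hδ1 F hF hfreq
  set k0 : ℤ := max k ⌈Real.logb 2 δ⁻¹⌉ with hk0def
  have hkk0 : k ≤ k0 := le_max_left _ _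
  have hδinv1 : (1:ℝ) < δ⁻¹ := (one_lt_inv₀ hδ0).mpr hδ1
  have hceil : (0:ℤ) < ⌈Real.logb 2 δ⁻¹⌉ :=
    Int.ceil_pos.mpr (Real.logb_pos (by norm_num) hδinv1)
  have hk00 : 0 ≤ k0 := le_trans hceil.le (le_max_right _ _)
  have hδinv : δ⁻¹ ≤ (2:ℝ) ^ (k0:ℤ) := by
    have h2 : ((⌈Real.logb 2 δ⁻¹⌉ : ℤ) : ℝ) ≤ (k0:ℝ) := by
      exact_mod_cast le_max_right k ⌈Real.logb 2 δ⁻¹⌉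
    have h1 : Real.logb 2 δ⁻¹ ≤ (k0 : ℝ) :=
      le_trans (Int.le_ceil _) h2
    calc δ⁻¹ = (2:ℝ) ^ Real.logb 2 δ⁻¹ :=
          (Real.rpow_logb (by norm_num) (by norm_num) (by positivity)).symm
      _ ≤ (2:ℝ) ^ (k0:ℝ) := by
          exact Real.rpow_le_rpow_of_exponent_le (by norm_num) h1
      _ = (2:ℝ) ^ (k0:ℤ) := by rw [← Real.rpow_intCast]
  have hdecay : (2:ℝ) ^ (-(c * (k0:ℝ))) ≤ δ ^ c := by
    have h1 : (2:ℝ) ^ (-(k0:ℝ)) ≤ δ := by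
      rw [Real.rpow_neg (by norm_num), show (2:ℝ) ^ (k0:ℝ) = (2:ℝ) ^ (k0:ℤ) by
        rw [← Real.rpow_intCast]]
      rw [inv_le_comm₀ (by positivity) hδ0]
      exact hδinv
    calc (2:ℝ) ^ (-(c * (k0:ℝ))) = ((2:ℝ) ^ (-(k0:ℝ))) ^ c := by
          rw [← Real.rpow_mul (by norm_num : (0:ℝ) ≤ 2)]; ring_nf
      _ ≤ δ ^ c := Real.rpow_le_rpow (by positivity) h1 hc.le
  set cc : Fin n → ℝ := fun i => (2:ℝ) ^ ((k - k0) * (d i : ℤ)) with hccdef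
  set ci : Fin n → ℝ := fun i => (2:ℝ) ^ ((k0 - k) * (d i : ℤ)) with hcidef
  have hcc0 : ∀ i, cc i ≠ 0 := fun i => by positivity
  have hci0 : ∀ i, ci i ≠ 0 := fun i => by positivity
  set G : Fin n → EuclideanSpace ℝ (Fin n) → ℂ :=
    fun i y => F i (scaleME cc hcc0 y) with hGdef
  -- operator identity
  have hAeq : avgOpE n d a k F = fun x => avgOpE n d a k0 G (scaleME ci hci0 x) := by
    funext x
    rw [avg_rescale d a k k0 F x]
    rfl
  -- Memℒp of G
  have hGmem : ∀ i, MemLp (G i) (n : ℝ≥0∞) volume :=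
    fun i => memLp_comp_scaleME cc hcc0 (hF i)
  -- frequency condition for G
  have hGfreq : ∃ j, ∀ ξ : EuclideanSpace ℝ (Fin n),
      |ξ j| ≤ (2 : ℝ) ^ (-(k0 * (d j : ℤ))) * δ⁻¹ → 𝓕 (G j) ξ = 0 := by
    obtain ⟨j, hj⟩ := hfreq
    refine ⟨j, fun ξ hξ => ?_⟩
    show 𝓕 (fun y => F j (scaleME cc hcc0 y)) ξ = 0
    rw [fourier_comp_scaleME cc hcc0 (F j) ξ]
    have hzero : 𝓕 (F j) ((scaleME cc hcc0).symm ξ) = 0 := by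
      apply hj
      rw [scaleME_symm_apply]
      have hccj : (cc j)⁻¹ = (2:ℝ) ^ ((k0 - k) * (d j:ℤ)) := by
        rw [hccdef, ← zpow_neg, show -((k - k0) * (d j:ℤ)) = (k0 - k) * (d j:ℤ) by ring]
      calc |(cc j)⁻¹ * ξ j| = (2:ℝ) ^ ((k0 - k) * (d j:ℤ)) * |ξ j| := by
            rw [abs_mul, hccj, abs_of_pos (by positivity)]
        _ ≤ (2:ℝ) ^ ((k0 - k) * (d j:ℤ)) * ((2 : ℝ) ^ (-(k0 * (d j : ℤ))) * δ⁻¹) := by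
            exact mul_le_mul_of_nonneg_left hξ (by positivity)
        _ = (2 : ℝ) ^ (-(k * (d j : ℤ))) * δ⁻¹ := by
            rw [← mul_assoc, ← zpow_add₀ (two_ne_zero),
              show (k0 - k) * (d j:ℤ) + -(k0 * (d j:ℤ)) = -(k * (d j:ℤ)) by ring]
    rw [hzero, smul_zero]
  -- apply the hypothesis at scale k0
  have hB := hyp k0 hk00 δ hδ0 hδ1 G hGmem hGfreq
  -- norm identities
  have hL : eLpNorm (avgOpE n d a k F) 1 volume
      = ENNReal.ofReal |(∏ i, ci i)⁻¹| * eLpNorm (avgOpE n d a k0 G) 1 volume := by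
    rw [hAeq]
    have := eLpNorm_comp_scaleME ci hci0 (avgOpE n d a k0 G) 1 one_ne_zero ENNReal.one_ne_top
    simpa using this
  have hnR0 : ((n:ℝ)) ≠ 0 := by positivity
  have hGnorm : ∀ i, eLpNorm (G i) (n : ℝ≥0∞) volume
      = ENNReal.ofReal |(∏ i, cc i)⁻¹| ^ (1/(n:ℝ)) * eLpNorm (F i) (n : ℝ≥0∞) volume := by
    intro i
    have := eLpNorm_comp_scaleME cc hcc0 (F i) (n : ℝ≥0∞)
      (by exact_mod_cast hnR0 ∘ fun h => by exact_mod_cast h) (ENNReal.natCast_ne_top n)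
    rw [ENNReal.toReal_natCast] at this
    exact this
  have hGprod : (∏ i, eLpNorm (G i) (n : ℝ≥0∞) volume)
      = ENNReal.ofReal |(∏ i, cc i)⁻¹| * ∏ i, eLpNorm (F i) (n : ℝ≥0∞) volume := by
    simp_rw [hGnorm]
    rw [Finset.prod_mul_distrib, Finset.prod_const, Finset.card_univ, Fintype.card_fin,
      ← ENNReal.rpow_natCast (ENNReal.ofReal |(∏ i, cc i)⁻¹| ^ (1/(n:ℝ))) n,
      ← ENNReal.rpow_mul, one_div, inv_mul_cancel₀ hnR0, ENNReal.rpow_one]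
  have hprodmul : (∏ i, ci i) * (∏ i, cc i) = 1 := by
    rw [← Finset.prod_mul_distrib]
    apply Finset.prod_eq_one
    intro i _
    rw [hcidef, hccdef, ← zpow_add₀ (two_ne_zero),
      show (k0 - k) * (d i:ℤ) + (k - k0) * (d i:ℤ) = 0 by ring, zpow_zero]
  have hone : ENNReal.ofReal |(∏ i, ci i)⁻¹| * ENNReal.ofReal |(∏ i, cc i)⁻¹| = 1 := by
    rw [← ENNReal.ofReal_mul (abs_nonneg _), ← abs_mul, ← mul_inv, hprodmul]
    norm_num
  calc eLpNorm (avgOpE n d a k F) 1 volume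
      = ENNReal.ofReal |(∏ i, ci i)⁻¹| * eLpNorm (avgOpE n d a k0 G) 1 volume := hL
    _ ≤ ENNReal.ofReal |(∏ i, ci i)⁻¹| *
        (ENNReal.ofReal (C * (δ ^ c + (2 : ℝ) ^ (-(c * (k0 : ℝ)))))
          * (ENNReal.ofReal |(∏ i, cc i)⁻¹| * ∏ i, eLpNorm (F i) (n : ℝ≥0∞) volume)) := by
        rw [← hGprod]
        exact mul_le_mul_right hB _
    _ = (ENNReal.ofReal |(∏ i, ci i)⁻¹| * ENNReal.ofReal |(∏ i, cc i)⁻¹|) *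
        (ENNReal.ofReal (C * (δ ^ c + (2 : ℝ) ^ (-(c * (k0 : ℝ)))))
          * ∏ i, eLpNorm (F i) (n : ℝ≥0∞) volume) := by ring
    _ = ENNReal.ofReal (C * (δ ^ c + (2 : ℝ) ^ (-(c * (k0 : ℝ)))))
          * ∏ i, eLpNorm (F i) (n : ℝ≥0∞) volume := by rw [hone, one_mul]
    _ ≤ ENNReal.ofReal (2 * C * δ ^ c) * ∏ i, eLpNorm (F i) (n : ℝ≥0∞) volume := by
        apply mul_le_mul_left
        apply ENNReal.ofReal_le_ofReal
        nlinarith [Real.rpow_nonneg hδ0.le c]
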